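/- arXiv:2208.09817 — 4 statements merged into one kernel-verified Lean document; each statement's English description precedes it below -/
import Mathlib

section
/- The convolution-smoothed check loss ℓ_{h,τ}(u) = ∫_{-∞}^{∞} ρ_τ(v) K_h(u - v) dv is convex, continuously differentiable, and its derivative satisfies ℓ'_{h,τ}(u) = K̄(u/h) - (1 - τ), where K̄(t) = ∫_{-∞}^{t} K(s) ds. -/
open MeasureTheory Set

/-- The quantile check loss ρ_τ(u) = (τ - 1{u<0})·u. -/
noncomputable def checkLoss (τ : ℝ) (u : ℝ) : ℝ := (τ - if u < 0 then 1 else 0) * u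

lemma checkLoss_lip {τ : ℝ} (hτ0 : 0 < τ) (hτ1 : τ < 1) (a b : ℝ) :
    |checkLoss τ a - checkLoss τ b| ≤ |a - b| := by
  have h1 : a - b ≤ |a - b| := le_abs_self _
  have h2 : -|a - b| ≤ a - b := neg_abs_le _
  unfold checkLoss
  rcases lt_or_ge a 0 with ha | ha <;> rcases lt_or_ge b 0 with hb | hb
  · rw [if_pos ha, if_pos hb, abs_le]
    constructor <;> nlinarith
  · rw [if_pos ha, if_neg (not_lt.2 hb), abs_le]
    constructor <;> nlinarith
  · rw [if_neg (not_lt.2 ha), if_pos hb, abs_le]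
    constructor <;> nlinarith
  · rw [if_neg (not_lt.2 ha), if_neg (not_lt.2 hb), abs_le]
    constructor <;> nlinarith

lemma checkLoss_lipschitzWith {τ : ℝ} (hτ0 : 0 < τ) (hτ1 : τ < 1) :
    LipschitzWith 1 (checkLoss τ) := by
  apply LipschitzWith.of_dist_le_mul
  intro a b
  rw [Real.dist_eq, Real.dist_eq, NNReal.coe_one, one_mul]
  exact checkLoss_lip hτ0 hτ1 a b

set_option maxHeartbeats 1000000 in
/-- the convolution-smoothed check loss is convex, continuously
differentiable, with derivative ℓ'_{h,τ}(u) = K̄(u/h) - (1 - τ). -/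
theorem smoothed_check_loss_deriv
    (τ h : ℝ) (hτ : τ ∈ Set.Ioo (0:ℝ) 1) (hh : 0 < h)
    (K : ℝ → ℝ) (hKcont : Continuous K) (hKnonneg : ∀ u, 0 ≤ K u)
    (hKint : (∫ u, K u) = 1)
    (ℓ : ℝ → ℝ)
    (hℓ : ∀ u, ℓ u = ∫ v, checkLoss τ v * (K ((u - v) / h) / h))
    (hint : ∀ u, Integrable (fun v => checkLoss τ v * (K ((u - v) / h) / h))) :
    ConvexOn ℝ Set.univ ℓ ∧
    Continuous (deriv ℓ) ∧
    (∀ u, HasDerivAt ℓ ((∫ s in Set.Iic (u / h), K s) - (1 - τ)) u) := by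
  obtain ⟨hτ0, hτ1⟩ := hτ
  have hKI : Integrable K := by
    by_contra hcon
    rw [integral_undef hcon] at hKint
    norm_num at hKint
  set c : ℝ → ℝ := fun t => K (t / h) / h with hc
  have hcI : Integrable c := (hKI.comp_div hh.ne').div_const h
  have hccont : Continuous c := (hKcont.comp (continuous_id.div_const h)).div_const h
  have hcnn : ∀ t, 0 ≤ c t := fun t => div_nonneg (hKnonneg _) hh.le
  have hcint : (∫ t, c t) = 1 := by
    simp only [hc]
    rw [MeasureTheory.integral_div, MeasureTheory.Measure.integral_comp_div K h,
      abs_of_pos hh, hKint, smul_eq_mul, mul_one, div_self hh.ne']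
  -- change of variables form
  have hℓ' : ∀ u, ℓ u = ∫ t, checkLoss τ (u - t) * c t := by
    intro u
    rw [hℓ u]
    have := MeasureTheory.integral_sub_left_eq_self
      (fun t => checkLoss τ (u - t) * c t) volume u
    simp only [sub_sub_cancel] at this
    exact this
  have hIint : ∀ u, Integrable (fun t => checkLoss τ (u - t) * c t) := by
    intro u
    have := (hint u).comp_sub_left u
    simpa [sub_sub_cancel] using this
  have hlip1 := checkLoss_lipschitzWith hτ0 hτ1
  -- cumulative integral of c over Iic
  have hIic : ∀ a : ℝ, (∫ t in Iic a, c t) = ∫ s in Iic (a / h), K s := by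
    intro a
    have hg : ∀ t, Set.indicator (Iic a) c t
        = (Set.indicator (Iic (a / h)) K) (t / h) / h := by
      intro t
      by_cases ht : t ≤ a
      · rw [Set.indicator_of_mem (show t ∈ Iic a from ht),
          Set.indicator_of_mem (mem_Iic.mpr (by gcongr : t / h ≤ a / h))]
      · rw [Set.indicator_of_notMem (show t ∉ Iic a from ht),
          Set.indicator_of_notMem (show t / h ∉ Iic (a / h) from by
            simp only [mem_Iic, not_le] at ht ⊢
            exact div_lt_div_of_pos_right ht hh)]
        simp
    rw [← MeasureTheory.integral_indicator measurableSet_Iic,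
        ← MeasureTheory.integral_indicator measurableSet_Iic]
    simp_rw [hg]
    rw [MeasureTheory.integral_div,
      MeasureTheory.Measure.integral_comp_div (Set.indicator (Iic (a / h)) K) h,
      abs_of_pos hh, smul_eq_mul]
    field_simp [mul_comm]
  -- the key derivative computation
  have key : ∀ u : ℝ, HasDerivAt ℓ ((∫ s in Set.Iic (u / h), K s) - (1 - τ)) u := by
    intro x₀
    set F : ℝ → ℝ → ℝ := fun x t => checkLoss τ (x - t) * c t with hF
    set F' : ℝ → ℝ := fun t => (τ - if x₀ - t < 0 then 1 else 0) * c t with hF'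
    have hmain := hasDerivAt_integral_of_dominated_loc_of_lip
      (F := F) (F' := F') (x₀ := x₀) (bound := c) (μ := volume) (s := Metric.ball x₀ 1) (Metric.ball_mem_nhds x₀ one_pos)
      (Filter.Eventually.of_forall fun x =>
        (((hlip1.continuous.comp (continuous_const.sub continuous_id)).mul
          hccont : Continuous fun t => checkLoss τ (x - t) * c t)).aestronglyMeasurable)
      (hIint x₀)
      (((measurable_const.sub ((Measurable.ite
          (measurableSet_lt (measurable_const.sub measurable_id) measurable_const)
          measurable_const measurable_const))).mul
        hccont.measurable).aestronglyMeasurable)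
      (Filter.Eventually.of_forall fun t => by
        apply LipschitzWith.lipschitzOnWith
        apply LipschitzWith.of_dist_le_mul
        intro a b
        rw [Real.dist_eq, Real.dist_eq]
        have heq : F a t - F b t = (checkLoss τ (a - t) - checkLoss τ (b - t)) * c t := by
          simp only [hF]; ring
        rw [heq, abs_mul]
        have h1 : |checkLoss τ (a - t) - checkLoss τ (b - t)| ≤ |a - b| := by
          have := checkLoss_lip hτ0 hτ1 (a - t) (b - t)
          rwa [sub_sub_sub_cancel_right] at this
        calc |checkLoss τ (a - t) - checkLoss τ (b - t)| * |c t|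
            ≤ |a - b| * |c t| := by
              exact mul_le_mul_of_nonneg_right h1 (abs_nonneg _)
          _ = (Real.nnabs (c t) : ℝ) * |a - b| := by
              rw [Real.coe_nnabs]; ring)
      hcI
      (by
        have hne : ∀ᵐ t : ℝ, t ≠ x₀ := by
          rw [Filter.Eventually]
          rw [mem_ae_iff]
          have : {t : ℝ | t ≠ x₀}ᶜ = {x₀} := by ext t; simp [eq_comm]
          rw [this]
          exact measure_singleton x₀
        filter_upwards [hne] with t ht
        rcases lt_or_gt_of_ne (sub_ne_zero.mpr (Ne.symm ht)) with hneg | hpos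
        · -- x₀ - t < 0 : locally checkLoss τ (x - t) = (τ - 1) * (x - t)
          have hopen : ∀ᶠ x in nhds x₀, x - t < 0 :=
            (isOpen_lt (continuous_id.sub continuous_const) continuous_const).eventually_mem
              (by simpa using hneg)
          have hd : HasDerivAt (fun x => (τ - 1) * (x - t) * c t) ((τ - 1) * c t) x₀ := by
            have hid : HasDerivAt (fun x : ℝ => x - t) 1 x₀ := (hasDerivAt_id x₀).sub_const t
            simpa [mul_comm, mul_assoc] using (hid.const_mul (τ - 1)).mul_const (c t)
          have : HasDerivAt (F · t) ((τ - 1) * c t) x₀ := by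
            apply hd.congr_of_eventuallyEq
            filter_upwards [hopen] with x hx
            simp only [hF, checkLoss, if_pos hx]
          have he : F' t = (τ - 1) * c t := by
            simp only [hF']
            rw [if_pos hneg]
          rwa [he]
        · -- x₀ - t > 0
          have hopen : ∀ᶠ x in nhds x₀, 0 < x - t :=
            (isOpen_lt continuous_const (continuous_id.sub continuous_const)).eventually_mem
              (by simpa using hpos)
          have hd : HasDerivAt (fun x => τ * (x - t) * c t) (τ * c t) x₀ := by
            have hid : HasDerivAt (fun x : ℝ => x - t) 1 x₀ := (hasDerivAt_id x₀).sub_const t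
            simpa [mul_comm, mul_assoc] using (hid.const_mul τ).mul_const (c t)
          have : HasDerivAt (F · t) (τ * c t) x₀ := by
            apply hd.congr_of_eventuallyEq
            filter_upwards [hopen] with x hx
            simp only [hF, checkLoss, if_neg (not_lt.2 hx.le), sub_zero]
          have he : F' t = τ * c t := by
            simp only [hF']
            rw [if_neg (not_lt.2 hpos.le), sub_zero]
          rwa [he])
    obtain ⟨-, hder⟩ := hmain
    -- identify the integral of F'
    have hF'val : (∫ t, F' t) = (∫ s in Set.Iic (x₀ / h), K s) - (1 - τ) := by
      have h1 : ∀ t, F' t = τ * c t - Set.indicator (Set.Ioi x₀) c t := by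
        intro t
        by_cases ht : x₀ < t
        · rw [Set.indicator_of_mem (show t ∈ Ioi x₀ from ht)]
          simp only [hF', if_pos (by linarith : x₀ - t < 0)]
          ring
        · rw [Set.indicator_of_notMem (show t ∉ Ioi x₀ from ht)]
          simp only [hF', if_neg (by simp only [mem_Ioi, not_lt] at ht; linarith : ¬ x₀ - t < 0)]
          ring
      simp_rw [h1]
      rw [MeasureTheory.integral_sub (hcI.const_mul τ) (hcI.indicator measurableSet_Ioi),
        MeasureTheory.integral_const_mul, hcint, mul_one,
        MeasureTheory.integral_indicator measurableSet_Ioi]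
      have hsplit : (∫ t in Iic x₀, c t) + (∫ t in Ioi x₀, c t) = 1 := by
        rw [intervalIntegral.integral_Iic_add_Ioi hcI.integrableOn hcI.integrableOn, hcint]
      have := hIic x₀
      linarith
    have hℓeq : ℓ = fun x => ∫ t, F x t := funext hℓ'
    rw [hℓeq, ← hF'val]
    exact hder
  -- continuity of the derivative
  have hΦcont : Continuous fun u : ℝ => (∫ s in Set.Iic (u / h), K s) - (1 - τ) := by
    have h1 : ∀ a : ℝ, (∫ s in Set.Iic a, K s)
        = (∫ s in Set.Iic (0:ℝ), K s) + ∫ s in (0:ℝ)..a, K s := by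
      intro a
      have := intervalIntegral.integral_Iic_sub_Iic
        (hKI.integrableOn (s := Iic (0:ℝ))) (hKI.integrableOn (s := Iic a))
      linarith
    have h2 : Continuous fun a : ℝ => ∫ s in (0:ℝ)..a, K s :=
      intervalIntegral.continuous_primitive (fun a b => hKI.intervalIntegrable) 0
    have h3 : Continuous fun a : ℝ => ∫ s in Set.Iic a, K s := by
      have : (fun a : ℝ => ∫ s in Set.Iic a, K s)
          = fun a : ℝ => (∫ s in Set.Iic (0:ℝ), K s) + ∫ s in (0:ℝ)..a, K s := funext h1
      rw [this]
      exact continuous_const.add h2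
    exact (h3.comp (continuous_id.div_const h)).sub continuous_const
  have hderiv_eq : deriv ℓ = fun u => (∫ s in Set.Iic (u / h), K s) - (1 - τ) :=
    funext fun u => (key u).deriv
  refine ⟨?_, ?_, key⟩
  · -- convexity
    apply Monotone.convexOn_univ_of_deriv (fun u => (key u).differentiableAt)
    rw [hderiv_eq]
    intro a b hab
    simp only [sub_le_sub_iff_right]
    apply MeasureTheory.setIntegral_mono_set hKI.integrableOn
      (Filter.Eventually.of_forall fun s => hKnonneg s)
    exact (Iic_subset_Iic.mpr (by gcongr)).eventuallyLE
  · rw [hderiv_eq]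
    exact hΦcont
end

section
/- The first derivative of the population smoothed quantile loss at the true quantile satisfies |m'_{h,k}(F^{-1}(τ_k))| ≤ (l₀ κ₂ / 2) h², where m'_{h,k}(b) = ∫ K(u) F(b - hu) du - τ_k. -/
open MeasureTheory Set

/-- |m'_{h,k}(F⁻¹(τ_k))| ≤ (l₀ κ₂ / 2) h², where
m'_{h,k}(b) = ∫ K(u) F(b - hu) du - τ_k. -/
theorem smoothed_loss_first_deriv_bias
    (τk h l₀ κ₂ qτ : ℝ) (hτ : τk ∈ Set.Ioo (0:ℝ) 1) (hh : 0 < h)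
    (K f F : ℝ → ℝ)
    (hKsymm : ∀ u, K (-u) = K u) (hKnonneg : ∀ u, 0 ≤ K u)
    (hKint : (∫ u, K u) = 1)
    (hκ₂ : κ₂ = ∫ u, u ^ 2 * K u)
    (hκ₂fin : Integrable (fun u => u ^ 2 * K u))
    (hF : ∀ x, F x = ∫ t in Set.Iic x, f t)
    (hfLip : ∀ u v, |f u - f v| ≤ l₀ * |u - v|)
    (hq : F qτ = τk)
    (hint : Integrable (fun u => K u * F (qτ - h * u))) :
    |(∫ u, K u * F (qτ - h * u)) - τk| ≤ l₀ * κ₂ / 2 * h ^ 2 := by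
  obtain ⟨hτ0, hτ1⟩ := hτ
  -- l₀ is nonnegative
  have hl₀ : 0 ≤ l₀ := by
    have := hfLip 1 0
    simp at this
    exact le_trans (abs_nonneg _) this
  -- f is continuous
  have hfc : Continuous f := by
    have : LipschitzWith l₀.toNNReal f := by
      apply LipschitzWith.of_dist_le_mul
      intro x y
      have := hfLip x y
      simpa [Real.dist_eq, Real.coe_toNNReal l₀ hl₀] using this
    exact this.continuous
  -- f is integrable on every Iic
  have hfi : ∀ x : ℝ, IntegrableOn f (Set.Iic x) := by
    by_cases hex : ∃ x₀, IntegrableOn f (Set.Iic x₀)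
    · obtain ⟨x₀, hx₀⟩ := hex
      intro x
      rcases le_total x x₀ with hle | hle
      · exact hx₀.mono_set (Set.Iic_subset_Iic.2 hle)
      · rw [← Set.Iic_union_Ioc_eq_Iic hle]
        exact hx₀.union ((hfc.continuousOn).integrableOn_Icc.mono_set Set.Ioc_subset_Icc_self)
    · push_neg at hex
      exfalso
      have : F qτ = 0 := by rw [hF]; exact integral_undef (hex qτ)
      rw [hq] at this; linarith
  -- F x - F y = interval integral of f
  have hFsub : ∀ x y : ℝ, F x - F y = ∫ t in y..x, f t := by
    intro x y
    rw [hF x, hF y]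
    exact intervalIntegral.integral_Iic_sub_Iic (hfi y) (hfi x)
  -- key pointwise bound
  have hG : ∀ a : ℝ, |F (qτ + a) + F (qτ - a) - 2 * F qτ| ≤ l₀ * a ^ 2 := by
    have main : ∀ a : ℝ, 0 ≤ a → |F (qτ + a) + F (qτ - a) - 2 * F qτ| ≤ l₀ * a ^ 2 := by
      intro a ha
      have h1 : F (qτ + a) - F qτ = ∫ t in (0:ℝ)..a, f (qτ + t) := by
        rw [intervalIntegral.integral_comp_add_left f qτ]
        simpa using hFsub (qτ + a) qτ
      have h2 : F qτ - F (qτ - a) = ∫ t in (0:ℝ)..a, f (qτ - t) := by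
        rw [intervalIntegral.integral_comp_sub_left f qτ]
        simpa using hFsub qτ (qτ - a)
      have hcont1 : Continuous fun t => f (qτ + t) := hfc.comp (by continuity)
      have hcont2 : Continuous fun t => f (qτ - t) := hfc.comp (by continuity)
      have heq : F (qτ + a) + F (qτ - a) - 2 * F qτ
          = ∫ t in (0:ℝ)..a, (f (qτ + t) - f (qτ - t)) := by
        rw [intervalIntegral.integral_sub (hcont1.intervalIntegrable 0 a)
          (hcont2.intervalIntegrable 0 a), ← h1, ← h2]
        ring
      rw [heq]
      calc |∫ t in (0:ℝ)..a, (f (qτ + t) - f (qτ - t))|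
          ≤ ∫ t in (0:ℝ)..a, |f (qτ + t) - f (qτ - t)| := by
            simpa using intervalIntegral.norm_integral_le_integral_norm (f := fun t => f (qτ + t) - f (qτ - t)) ha
        _ ≤ ∫ t in (0:ℝ)..a, l₀ * (2 * t) := by
            apply intervalIntegral.integral_mono_on ha
            · exact ((hcont1.sub hcont2).abs).intervalIntegrable 0 a
            · exact (continuous_const.mul (continuous_const.mul continuous_id)).intervalIntegrable 0 a
            · intro t ht
              have := hfLip (qτ + t) (qτ - t)
              have h2t : |(qτ + t) - (qτ - t)| = 2 * t := by
                rw [show (qτ + t) - (qτ - t) = 2 * t by ring, abs_of_nonneg (by linarith [ht.1])]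
              rw [h2t] at this
              exact this
        _ = l₀ * a ^ 2 := by
            rw [intervalIntegral.integral_const_mul]
            have : ∫ t in (0:ℝ)..a, 2 * t = a ^ 2 := by
              rw [intervalIntegral.integral_const_mul]
              simp [integral_id]
              ring
            rw [this]
    intro a
    rcases le_total 0 a with ha | ha
    · exact main a ha
    · have := main (-a) (by linarith)
      have e1 : qτ + -a = qτ - a := by ring
      have e2 : qτ - -a = qτ + a := by ring
      rw [e1, e2] at this
      calc |F (qτ + a) + F (qτ - a) - 2 * F qτ|
          = |F (qτ - a) + F (qτ + a) - 2 * F qτ| := by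
            rw [show F (qτ + a) + F (qτ - a) - 2 * F qτ
              = F (qτ - a) + F (qτ + a) - 2 * F qτ from by ring]
        _ ≤ l₀ * (-a) ^ 2 := this
        _ = l₀ * a ^ 2 := by ring
  -- K is integrable
  have hKi : Integrable K := by
    by_contra hc
    rw [integral_undef hc] at hKint
    norm_num at hKint
  -- the reflected integrand is integrable
  have hint2 : Integrable (fun u => K u * F (qτ + h * u)) := by
    refine hint.comp_neg.congr ?_
    filter_upwards with u
    rw [hKsymm u]
    congr 1
    ring
  -- reflection identity
  have hrefl : (∫ u, K u * F (qτ + h * u)) = ∫ u, K u * F (qτ - h * u) := by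
    rw [← MeasureTheory.integral_neg_eq_self (fun u => K u * F (qτ + h * u)) volume]
    congr 1
    funext u
    rw [hKsymm u]
    congr 1
    ring
  -- symmetrization
  have hkey : (∫ u, K u * F (qτ - h * u)) - τk
      = (1 / 2) * ∫ u, K u * (F (qτ + h * u) + F (qτ - h * u) - 2 * F qτ) := by
    have hsplit : (∫ u, K u * (F (qτ + h * u) + F (qτ - h * u) - 2 * F qτ))
        = (∫ u, K u * F (qτ + h * u)) + (∫ u, K u * F (qτ - h * u))
          - (2 * F qτ) * ∫ u, K u := by
      have heq : (fun u => K u * (F (qτ + h * u) + F (qτ - h * u) - 2 * F qτ))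
          = fun u => (K u * F (qτ + h * u) + K u * F (qτ - h * u)) - (2 * F qτ) * K u := by
        funext u; ring
      have hsum : Integrable (fun u => K u * F (qτ + h * u) + K u * F (qτ - h * u)) :=
        hint2.add hint
      have hmul : Integrable (fun u => 2 * F qτ * K u) := hKi.const_mul _
      rw [heq, integral_sub hsum hmul, integral_add hint2 hint, integral_const_mul]
    rw [hsplit, hrefl, hKint, hq]
    ring
  rw [hkey]
  have hbound : |∫ u, K u * (F (qτ + h * u) + F (qτ - h * u) - 2 * F qτ)|
      ≤ l₀ * h ^ 2 * κ₂ := by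
    have habs : |∫ u, K u * (F (qτ + h * u) + F (qτ - h * u) - 2 * F qτ)|
        ≤ ∫ u, |K u * (F (qτ + h * u) + F (qτ - h * u) - 2 * F qτ)| := by
      have := norm_integral_le_integral_norm (μ := volume)
        (fun u => K u * (F (qτ + h * u) + F (qτ - h * u) - 2 * F qτ))
      simpa [Real.norm_eq_abs, ← abs_mul] using this
    have hiG : Integrable (fun u => K u * (F (qτ + h * u) + F (qτ - h * u) - 2 * F qτ)) := by
      apply Integrable.congr (((hint2.add hint).sub (hKi.const_mul (2 * F qτ))))
      filter_upwards with u
      simp only [Pi.add_apply, Pi.sub_apply]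
      ring
    have hmono : (∫ u, |K u * (F (qτ + h * u) + F (qτ - h * u) - 2 * F qτ)|)
        ≤ ∫ u, (l₀ * h ^ 2) * (u ^ 2 * K u) := by
      apply integral_mono hiG.abs (hκ₂fin.const_mul _)
      intro u
      have := hG (h * u)
      calc |K u * (F (qτ + h * u) + F (qτ - h * u) - 2 * F qτ)|
          = K u * |F (qτ + h * u) + F (qτ - h * u) - 2 * F qτ| := by
            rw [abs_mul, abs_of_nonneg (hKnonneg u)]
        _ ≤ K u * (l₀ * (h * u) ^ 2) := by
            exact mul_le_mul_of_nonneg_left this (hKnonneg u)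
        _ = (l₀ * h ^ 2) * (u ^ 2 * K u) := by ring
    calc |∫ u, K u * (F (qτ + h * u) + F (qτ - h * u) - 2 * F qτ)|
        ≤ ∫ u, (l₀ * h ^ 2) * (u ^ 2 * K u) := le_trans habs hmono
      _ = (l₀ * h ^ 2) * ∫ u, u ^ 2 * K u := integral_const_mul _ _
      _ = l₀ * h ^ 2 * κ₂ := by rw [← hκ₂]
  rw [abs_mul]
  have : |(1:ℝ)/2| = 1/2 := by norm_num
  rw [this]
  calc (1/2) * |∫ u, K u * (F (qτ + h * u) + F (qτ - h * u) - 2 * F qτ)|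
      ≤ (1/2) * (l₀ * h ^ 2 * κ₂) := by linarith [hbound]
    _ = l₀ * κ₂ / 2 * h ^ 2 := by ring
end

section
/- Deterministic cone property of the L1-penalized smoothed CQR estimator: Let Q̂ : ℝ^q × ℝ^p → ℝ be convex and differentiable, (α*, β*) a fixed point with ζ* = ∇_α Q̂(α*, β*) and ω* = ∇_β Q̂(α*, β*), and let (α̂, β̂) minimize (α,β) ↦ Q̂(α,β) + λ‖β‖₁. Suppose β* is supported on S and ‖ζ*‖_∞ ≤ 3λ/(2q), ‖ω*‖_∞ ≤ λ/2. Then ‖β̂_{S^c} - β*_{S^c}‖₁ ≤ 3‖β̂_S - β*_S‖₁ + 3 q^{-1/2} ‖α̂ - α*‖₂. -/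
/-- First-order condition for a convex differentiable function:
the linear approximation at `x` lies below the function. -/
lemma convexOn_fderiv_le_sub {E : Type*} [NormedAddCommGroup E] [NormedSpace ℝ E]
    {f : E → ℝ} (hc : ConvexOn ℝ Set.univ f) (hd : Differentiable ℝ f) (x y : E) :
    fderiv ℝ f x (y - x) ≤ f y - f x := by
  set g : ℝ → ℝ := fun t => f (x + t • (y - x)) with hg
  have hline : ∀ t : ℝ, x + t • (y - x) = (AffineMap.lineMap x y : ℝ →ᵃ[ℝ] E) t := by
    intro t
    simp [AffineMap.lineMap_apply]
    abel
  have hgconv : ConvexOn ℝ Set.univ g := by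
    have := hc.comp_affineMap (AffineMap.lineMap x y : ℝ →ᵃ[ℝ] E)
    have hpre : (AffineMap.lineMap x y : ℝ →ᵃ[ℝ] E) ⁻¹' Set.univ = (Set.univ : Set ℝ) := by
      simp
    rw [hpre] at this
    refine ⟨convex_univ, ?_⟩
    intro a _ b _ wa wb hwa hwb hw
    have h2 := this.2 (Set.mem_univ a) (Set.mem_univ b) hwa hwb hw
    simpa [g, Function.comp, hline] using h2
  have hinner : HasDerivAt (fun t : ℝ => x + t • (y - x)) (y - x) (0 : ℝ) := by
    simpa using ((hasDerivAt_id (0 : ℝ)).smul_const (y - x)).const_add x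
  have hgd : HasDerivAt g (fderiv ℝ f x (y - x)) 0 := by
    have h0 : x + (0 : ℝ) • (y - x) = x := by simp
    have hfd : HasFDerivAt f (fderiv ℝ f x) (x + (0 : ℝ) • (y - x)) := by
      rw [h0]; exact (hd x).hasFDerivAt
    exact hfd.comp_hasDerivAt 0 hinner
  have hslope := hgconv.le_slope_of_hasDerivAt (Set.mem_univ (0 : ℝ)) (Set.mem_univ (1 : ℝ))
    one_pos hgd
  have hgl : slope g 0 1 = f y - f x := by
    simp [slope_def_field, g]
  linarith [hslope.trans_eq hgl]

/-- deterministic cone property of the L1-penalized smoothed CQR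
estimator: conditioned on ‖ζ*‖_∞ ≤ 3λ/(2q) and ‖ω*‖_∞ ≤ λ/2,
‖β̂_{Sᶜ} - β*_{Sᶜ}‖₁ ≤ 3‖β̂_S - β*_S‖₁ + 3 q^{-1/2} ‖α̂ - α*‖₂. -/
theorem cone_property_l1_penalized
    (q p : ℕ) (hq : 0 < q)
    (Qhat : (Fin q → ℝ) × (Fin p → ℝ) → ℝ)
    (hconv : ConvexOn ℝ Set.univ Qhat) (hdiff : Differentiable ℝ Qhat)
    (αstar : Fin q → ℝ) (βstar : Fin p → ℝ)
    (ζstar : Fin q → ℝ) (ωstar : Fin p → ℝ)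
    (hgrad : ∀ (a : Fin q → ℝ) (b : Fin p → ℝ),
      fderiv ℝ Qhat (αstar, βstar) (a, b) =
        (∑ k, ζstar k * a k) + ∑ j, ωstar j * b j)
    (lam : ℝ) (hlam : 0 < lam)
    (S : Finset (Fin p)) (hsupp : ∀ j ∉ S, βstar j = 0)
    (αhat : Fin q → ℝ) (βhat : Fin p → ℝ)
    (hmin : ∀ v : (Fin q → ℝ) × (Fin p → ℝ),
      Qhat (αhat, βhat) + lam * ∑ j, |βhat j| ≤ Qhat v + lam * ∑ j, |v.2 j|)
    (hζ : ∀ k, |ζstar k| ≤ 3 * lam / (2 * q))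
    (hω : ∀ j, |ωstar j| ≤ lam / 2) :
    ∑ j ∈ Sᶜ, |βhat j - βstar j| ≤
      3 * ∑ j ∈ S, |βhat j - βstar j| +
        3 / Real.sqrt q * Real.sqrt (∑ k, (αhat k - αstar k) ^ 2) := by
  set A := ∑ j ∈ S, |βhat j - βstar j| with hA
  set B := ∑ j ∈ Sᶜ, |βhat j - βstar j| with hB
  set N := Real.sqrt (∑ k, (αhat k - αstar k) ^ 2) with hN
  set T := ∑ k, |αhat k - αstar k| with hT
  have hqR : (0 : ℝ) < (q : ℝ) := by exact_mod_cast hq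
  have hsqpos : 0 < Real.sqrt q := Real.sqrt_pos.mpr hqR
  have hNnn : 0 ≤ N := Real.sqrt_nonneg _
  have hAnn : 0 ≤ A := Finset.sum_nonneg fun _ _ => abs_nonneg _
  have hBnn : 0 ≤ B := Finset.sum_nonneg fun _ _ => abs_nonneg _
  -- first-order convexity inequality
  have hfo := convexOn_fderiv_le_sub hconv hdiff (αstar, βstar) (αhat, βhat)
  have hsub : (αhat, βhat) - (αstar, βstar) = (αhat - αstar, βhat - βstar) := rfl
  rw [hsub, hgrad (αhat - αstar) (βhat - βstar)] at hfo
  -- minimality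
  have hm := hmin (αstar, βstar)
  have key : (∑ k, ζstar k * (αhat k - αstar k)) + ∑ j, ωstar j * (βhat j - βstar j)
      ≤ lam * ∑ j, |βstar j| - lam * ∑ j, |βhat j| := by
    have : (∑ k, ζstar k * ((αhat - αstar) k)) + ∑ j, ωstar j * ((βhat - βstar) j)
        ≤ Qhat (αhat, βhat) - Qhat (αstar, βstar) := hfo
    simp only [Pi.sub_apply] at this
    linarith
  -- bound the ζ term below
  have hζsum : -(3 * lam / (2 * q) * T) ≤ ∑ k, ζstar k * (αhat k - αstar k) := by
    have hsum : ∑ k, -(3 * lam / (2 * (q:ℝ)) * |αhat k - αstar k|)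
        = -(3 * lam / (2 * q) * T) := by
      rw [hT, Finset.mul_sum, ← Finset.sum_neg_distrib]
    rw [← hsum]
    apply Finset.sum_le_sum
    intro k _
    have h1 : |ζstar k * (αhat k - αstar k)| ≤ 3 * lam / (2 * q) * |αhat k - αstar k| := by
      rw [abs_mul]
      exact mul_le_mul_of_nonneg_right (hζ k) (abs_nonneg _)
    linarith [neg_abs_le (ζstar k * (αhat k - αstar k))]
  -- bound the ω term below
  have hωsum : -(lam / 2 * (A + B)) ≤ ∑ j, ωstar j * (βhat j - βstar j) := by
    have hAB : A + B = ∑ j, |βhat j - βstar j| := by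
      rw [hA, hB]
      exact Finset.sum_add_sum_compl S _
    have hsum : ∑ j, -(lam / 2 * |βhat j - βstar j|)
        = -(lam / 2 * ∑ j, |βhat j - βstar j|) := by
      rw [Finset.mul_sum, ← Finset.sum_neg_distrib]
    rw [hAB, ← hsum]
    apply Finset.sum_le_sum
    intro j _
    have h1 : |ωstar j * (βhat j - βstar j)| ≤ lam / 2 * |βhat j - βstar j| := by
      rw [abs_mul]
      exact mul_le_mul_of_nonneg_right (hω j) (abs_nonneg _)
    linarith [neg_abs_le (ωstar j * (βhat j - βstar j))]
  -- bound the RHS of key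
  have hrhs : lam * ∑ j, |βstar j| - lam * ∑ j, |βhat j| ≤ lam * A - lam * B := by
    have h1 : ∑ j, |βstar j| = ∑ j ∈ S, |βstar j| := by
      rw [← Finset.sum_add_sum_compl S fun j => |βstar j|]
      have : ∑ j ∈ Sᶜ, |βstar j| = 0 := by
        apply Finset.sum_eq_zero
        intro j hj
        rw [hsupp j (Finset.mem_compl.mp hj), abs_zero]
      linarith
    have h2 : ∑ j, |βhat j| = ∑ j ∈ S, |βhat j| + ∑ j ∈ Sᶜ, |βhat j| :=
      (Finset.sum_add_sum_compl S _).symm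
    have h3 : ∑ j ∈ S, |βstar j| - ∑ j ∈ S, |βhat j| ≤ A := by
      rw [hA, ← Finset.sum_sub_distrib]
      apply Finset.sum_le_sum
      intro j _
      have := abs_sub_abs_le_abs_sub (βstar j) (βhat j)
      have habs : |βstar j - βhat j| = |βhat j - βstar j| := abs_sub_comm _ _
      linarith
    have h4 : B ≤ ∑ j ∈ Sᶜ, |βhat j| := by
      rw [hB]
      apply Finset.sum_le_sum
      intro j hj
      rw [hsupp j (Finset.mem_compl.mp hj), sub_zero]
    nlinarith [hlam.le]
  -- Cauchy–Schwarz: T ≤ √q · N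
  have hTN : T ≤ Real.sqrt q * N := by
    have hcs := Finset.sum_mul_sq_le_sq_mul_sq Finset.univ (fun _ : Fin q => (1 : ℝ))
      (fun k => |αhat k - αstar k|)
    simp only [one_mul, one_pow, Finset.sum_const, Finset.card_univ, Fintype.card_fin,
      nsmul_eq_mul, mul_one, sq_abs] at hcs
    have hTnn : 0 ≤ T := Finset.sum_nonneg fun _ _ => abs_nonneg _
    have : T ≤ Real.sqrt ((q : ℝ) * ∑ k, (αhat k - αstar k) ^ 2) := by
      rw [Real.le_sqrt hTnn]
      · exact hcs
      · positivity
    rwa [Real.sqrt_mul hqR.le] at this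
  -- combine
  have hsq : Real.sqrt q * Real.sqrt q = (q : ℝ) := Real.mul_self_sqrt hqR.le
  have hcoef : 3 * lam / (2 * q) * (Real.sqrt q * N) = lam / 2 * (3 / Real.sqrt q * N) := by
    field_simp
    linear_combination N * hsq
  have hζN : -(lam / 2 * (3 / Real.sqrt q * N)) ≤ ∑ k, ζstar k * (αhat k - αstar k) := by
    have hc : 3 * lam / (2 * q) * T ≤ 3 * lam / (2 * q) * (Real.sqrt q * N) :=
      mul_le_mul_of_nonneg_left hTN (by positivity)
    rw [hcoef] at hc
    linarith
  have main : lam / 2 * B ≤ lam / 2 * (3 * A + 3 / Real.sqrt q * N) := by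
    nlinarith [key, hζN, hωsum, hrhs]
  have := (mul_le_mul_iff_right₀ (by positivity : (0:ℝ) < lam / 2)).mp main
  linarith
end

section
/- Intermediate inequality for the cone property: under the same setup, (λ - ‖ω*‖_∞)·‖β̂_{S^c} - β*_{S^c}‖₁ ≤ (λ + ‖ω*‖_∞)·‖β̂_S - β*_S‖₁ + ‖ζ*‖_∞·‖α̂ - α*‖₁. -/
/-- Gradient inequality for a convex differentiable function:
`f x + f'(x)(y - x) ≤ f y`. -/
lemma grad_ineq_aux {E : Type*} [NormedAddCommGroup E] [NormedSpace ℝ E]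
    (f : E → ℝ) (hconv : ConvexOn ℝ Set.univ f) (x y : E)
    (hd : DifferentiableAt ℝ f x) :
    f x + fderiv ℝ f x (y - x) ≤ f y := by
  set d := y - x with hdd
  set g : ℝ → ℝ := fun t => f (x + t • d) with hg
  -- convexity of g
  have hgconv : ConvexOn ℝ Set.univ g := by
    refine ⟨convex_univ, fun a _ b _ ta tb hta htb hab => ?_⟩
    have h2 := hconv.2 (Set.mem_univ (x + a • d)) (Set.mem_univ (x + b • d)) hta htb hab
    have key : x + (ta * a + tb * b) • d = ta • (x + a • d) + tb • (x + b • d) := by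
      obtain rfl : tb = 1 - ta := by linarith
      module
    simpa [hg, smul_eq_mul, key] using h2
  -- derivative of g at 0
  have hc : HasDerivAt (fun t : ℝ => x + t • d) d 0 := by
    simpa using ((hasDerivAt_id (0:ℝ)).smul_const d).const_add x
  have hg0 : HasDerivAt g (fderiv ℝ f x d) 0 := by
    have hfd : HasFDerivAt f (fderiv ℝ f x) (x + (0:ℝ) • d) := by
      simpa using hd.hasFDerivAt
    have := hfd.comp_hasDerivAt 0 hc
    exact this
  have hs : fderiv ℝ f x d ≤ slope g 0 1 :=
    hgconv.le_slope_of_hasDerivAt (Set.mem_univ _) (Set.mem_univ _) one_pos hg0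
  have hslope : slope g 0 1 = f y - f x := by
    simp [slope_def_field, hg, hdd]
  rw [hslope] at hs
  linarith

/-- intermediate inequality for the cone property:
(λ - ‖ω*‖_∞)‖β̂_{Sᶜ} - β*_{Sᶜ}‖₁ ≤ (λ + ‖ω*‖_∞)‖β̂_S - β*_S‖₁ + ‖ζ*‖_∞‖α̂ - α*‖₁.
Here the norm on `Fin q → ℝ` / `Fin p → ℝ` is the sup norm. -/
theorem cone_property_intermediate
    (q p : ℕ) (hq : 0 < q)
    (Qhat : (Fin q → ℝ) × (Fin p → ℝ) → ℝ)
    (hconv : ConvexOn ℝ Set.univ Qhat) (hdiff : Differentiable ℝ Qhat)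
    (αstar : Fin q → ℝ) (βstar : Fin p → ℝ)
    (ζstar : Fin q → ℝ) (ωstar : Fin p → ℝ)
    (hgrad : ∀ (a : Fin q → ℝ) (b : Fin p → ℝ),
      fderiv ℝ Qhat (αstar, βstar) (a, b) =
        (∑ k, ζstar k * a k) + ∑ j, ωstar j * b j)
    (lam : ℝ) (hlam : 0 < lam)
    (S : Finset (Fin p)) (hsupp : ∀ j ∉ S, βstar j = 0)
    (αhat : Fin q → ℝ) (βhat : Fin p → ℝ)
    (hmin : ∀ v : (Fin q → ℝ) × (Fin p → ℝ),
      Qhat (αhat, βhat) + lam * ∑ j, |βhat j| ≤ Qhat v + lam * ∑ j, |v.2 j|) :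
    (lam - ‖ωstar‖) * ∑ j ∈ Sᶜ, |βhat j - βstar j| ≤
      (lam + ‖ωstar‖) * ∑ j ∈ S, |βhat j - βstar j| +
        ‖ζstar‖ * ∑ k, |αhat k - αstar k| := by
  set x : (Fin q → ℝ) × (Fin p → ℝ) := (αstar, βstar)
  set yv : (Fin q → ℝ) × (Fin p → ℝ) := (αhat, βhat)
  have hgi := grad_ineq_aux Qhat hconv x yv (hdiff x)
  have hsub : yv - x = (αhat - αstar, βhat - βstar) := rfl
  have hD : fderiv ℝ Qhat x (yv - x) =
      (∑ k, ζstar k * (αhat k - αstar k)) + ∑ j, ωstar j * (βhat j - βstar j) := by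
    rw [hsub]; exact hgrad _ _
  have hm := hmin x
  -- combine: D + lam * ∑|β̂| ≤ lam * ∑|β*|
  have hcomb : (∑ k, ζstar k * (αhat k - αstar k)) +
      (∑ j, ωstar j * (βhat j - βstar j)) + lam * ∑ j, |βhat j| ≤ lam * ∑ j, |βstar j| := by
    rw [← hD]
    have : Qhat yv = Qhat (αhat, βhat) := rfl
    simp only [x] at hm ⊢
    linarith [hgi]
  -- sum splits
  have hsplit : ∀ f : Fin p → ℝ, ∑ j, f j = ∑ j ∈ S, f j + ∑ j ∈ Sᶜ, f j := by
    intro f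
    rw [← Finset.sum_add_sum_compl S f]
  -- bounds on coordinates
  have hωb : ∀ j, |ωstar j| ≤ ‖ωstar‖ := fun j => by
    simpa [Real.norm_eq_abs] using norm_le_pi_norm ωstar j
  have hζb : ∀ k, |ζstar k| ≤ ‖ζstar‖ := fun k => by
    simpa [Real.norm_eq_abs] using norm_le_pi_norm ζstar k
  -- bound -∑ζΔα ≤ ‖ζ‖ ∑|Δα|
  have hζ : -(∑ k, ζstar k * (αhat k - αstar k)) ≤ ‖ζstar‖ * ∑ k, |αhat k - αstar k| := by
    rw [← Finset.sum_neg_distrib, Finset.mul_sum]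
    refine Finset.sum_le_sum fun k _ => ?_
    calc -(ζstar k * (αhat k - αstar k)) ≤ |ζstar k * (αhat k - αstar k)| := neg_le_abs _
      _ = |ζstar k| * |αhat k - αstar k| := abs_mul _ _
      _ ≤ ‖ζstar‖ * |αhat k - αstar k| := by
          exact mul_le_mul_of_nonneg_right (hζb k) (abs_nonneg _)
  have hω : -(∑ j, ωstar j * (βhat j - βstar j)) ≤ ‖ωstar‖ * ∑ j, |βhat j - βstar j| := by
    rw [← Finset.sum_neg_distrib, Finset.mul_sum]
    refine Finset.sum_le_sum fun j _ => ?_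
    calc -(ωstar j * (βhat j - βstar j)) ≤ |ωstar j * (βhat j - βstar j)| := neg_le_abs _
      _ = |ωstar j| * |βhat j - βstar j| := abs_mul _ _
      _ ≤ ‖ωstar‖ * |βhat j - βstar j| := by
          exact mul_le_mul_of_nonneg_right (hωb j) (abs_nonneg _)
  -- ℓ1 lower bound: ∑|β̂| - ∑|β*| ≥ ∑_{Sᶜ}|Δβ| - ∑_S|Δβ|
  have h1 : ∑ j ∈ Sᶜ, |βhat j - βstar j| - ∑ j ∈ S, |βhat j - βstar j| ≤
      ∑ j, |βhat j| - ∑ j, |βstar j| := by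
    rw [hsplit (fun j => |βhat j|), hsplit (fun j => |βstar j|)]
    have hc : ∑ j ∈ Sᶜ, |βstar j| = 0 :=
      Finset.sum_eq_zero fun j hj => by rw [hsupp j (Finset.mem_compl.mp hj), abs_zero]
    have hc2 : ∑ j ∈ Sᶜ, |βhat j - βstar j| = ∑ j ∈ Sᶜ, |βhat j| :=
      Finset.sum_congr rfl fun j hj => by rw [hsupp j (Finset.mem_compl.mp hj), sub_zero]
    have hS : ∑ j ∈ S, |βstar j| - ∑ j ∈ S, |βhat j| ≤ ∑ j ∈ S, |βhat j - βstar j| := by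
      rw [← Finset.sum_sub_distrib]
      refine Finset.sum_le_sum fun j _ => ?_
      have := abs_sub_abs_le_abs_sub (βstar j) (βhat j)
      rw [abs_sub_comm] at this
      linarith
    linarith [hc, hc2, hS]
  have hβsplit := hsplit (fun j => |βhat j - βstar j|)
  have h2 := mul_le_mul_of_nonneg_left h1 hlam.le
  rw [hβsplit, mul_add] at hω
  nlinarith [hcomb, hζ, hω, h2]
end
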